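/- Let Γ be a group, Γ' a subgroup of Γ of finite index, and f : Γ' → Γ a group homomorphism. Define subgroups Γ_n of Γ inductively by Γ_0 = Γ, Γ_1 = Γ', and Γ_{n} = {γ ∈ Γ_{n-1} : f(γ) ∈ Γ_{n-1}} for n ≥ 2. Then the sequence n ↦ [Γ_n : Γ_{n+1}] is non-increasing. -/

import Mathlib

/-- The descending sequence of subgroups attached to a virtual endomorphism `(Γ', f)`
of a group `Γ`:  `Γ₀ = Γ`, `Γ₁ = Γ'` and, for `n ≥ 2`,
`Γₙ = {γ ∈ Γₙ₋₁ | f γ ∈ Γₙ₋₁}`. -/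
def virtualEndTower {Γ : Type*} [Group Γ] (Γ' : Subgroup Γ) (f : Γ' →* Γ) :
    ℕ → Subgroup Γ
  | 0 => ⊤
  | 1 => Γ'
  | (n + 2) =>
    Subgroup.map Γ'.subtype
      (((virtualEndTower Γ' f (n + 1)).comap Γ'.subtype) ⊓
        ((virtualEndTower Γ' f (n + 1)).comap f))

lemma virtualEndTower_le_base {Γ : Type*} [Group Γ] (Γ' : Subgroup Γ) (f : Γ' →* Γ) (n : ℕ) :
    virtualEndTower Γ' f (n + 1) ≤ Γ' := by
  cases n with
  | zero => exact le_rfl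
  | succ m =>
    rw [virtualEndTower]
    intro x hx
    obtain ⟨y, _, rfl⟩ := hx
    exact y.2

lemma virtualEndTower_succ_le {Γ : Type*} [Group Γ] (Γ' : Subgroup Γ) (f : Γ' →* Γ) (n : ℕ) :
    virtualEndTower Γ' f (n + 1) ≤ virtualEndTower Γ' f n := by
  cases n with
  | zero => exact le_top
  | succ m =>
    rw [virtualEndTower]
    intro x hx
    obtain ⟨y, hy, rfl⟩ := hx
    exact hy.1

lemma virtualEndTower_mem_apply {Γ : Type*} [Group Γ] (Γ' : Subgroup Γ) (f : Γ' →* Γ) (n : ℕ)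
    (x : Γ') (hx : (x : Γ) ∈ virtualEndTower Γ' f (n + 1)) : f x ∈ virtualEndTower Γ' f n := by
  cases n with
  | zero => exact Subgroup.mem_top _
  | succ m =>
    rw [virtualEndTower] at hx
    obtain ⟨y, hy, hxy⟩ := hx
    have : y = x := Subtype.ext hxy
    subst this
    exact hy.2

lemma virtualEndTower_finiteIndex {Γ : Type*} [Group Γ] (Γ' : Subgroup Γ)
    (hΓ' : Γ'.FiniteIndex) (f : Γ' →* Γ) (n : ℕ) :
    (virtualEndTower Γ' f n).FiniteIndex := by
  induction n with
  | zero => exact Subgroup.instFiniteIndexTop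
  | succ m ih =>
    cases m with
    | zero => exact hΓ'
    | succ k =>
      rw [virtualEndTower]
      set K := virtualEndTower Γ' f (k + 1) with hK
      haveI : K.FiniteIndex := ih
      haveI hA : (K.comap Γ'.subtype).FiniteIndex := K.instFiniteIndex_subgroupOf Γ'
      haveI hB : (K.comap f).FiniteIndex := by
        constructor
        rw [Subgroup.index_comap]
        exact (K.instFiniteIndex_subgroupOf f.range).index_ne_zero
      haveI hAB : ((K.comap Γ'.subtype) ⊓ (K.comap f)).FiniteIndex := inferInstance
      constructor
      have hle : Subgroup.map Γ'.subtype ((K.comap Γ'.subtype) ⊓ (K.comap f)) ≤ Γ' := by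
        intro x hx
        obtain ⟨y, _, rfl⟩ := hx
        exact y.2
      have := Subgroup.relIndex_mul_index hle
      rw [Subgroup.relIndex, Subgroup.subgroupOf, Subgroup.comap_map_eq_self_of_injective
        Γ'.subtype_injective] at this
      rw [← this]
      exact mul_ne_zero hAB.index_ne_zero hΓ'.index_ne_zero

/-- For a virtual endomorphism `(Γ', f)` of a group `Γ` (with `Γ'` of
finite index), the sequence `n ↦ [Γₙ : Γₙ₊₁]` of indices is non-increasing. -/
theorem virtualEndTower_relindex_antitone {Γ : Type*} [Group Γ]
    (Γ' : Subgroup Γ) (hΓ' : Γ'.FiniteIndex) (f : Γ' →* Γ) (n : ℕ) :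
    (virtualEndTower Γ' f (n + 2)).relIndex (virtualEndTower Γ' f (n + 1)) ≤
      (virtualEndTower Γ' f (n + 1)).relIndex (virtualEndTower Γ' f n) := by
  set H := virtualEndTower Γ' f (n + 1) with hHdef
  set A := H.comap Γ'.subtype with hAdef
  set B := H.comap f with hBdef
  have hHle : H ≤ Γ' := virtualEndTower_le_base Γ' f n
  have hmap : Subgroup.map Γ'.subtype A = H := by
    rw [hAdef, Subgroup.map_comap_eq, Γ'.range_subtype, inf_eq_right.mpr hHle]
  -- rewrite the LHS as a relative index inside Γ'
  have hLHS : (virtualEndTower Γ' f (n + 2)).relIndex H = B.relIndex A := by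
    show (Subgroup.map Γ'.subtype (A ⊓ B)).relIndex H = B.relIndex A
    rw [← hmap, ← Subgroup.relIndex_comap,
      Subgroup.comap_map_eq_self_of_injective Γ'.subtype_injective,
      Subgroup.inf_relIndex_left]
  -- the restriction of `f` to `A` has range inside `Γₙ`
  have hrange : (f.comp A.subtype).range ≤ virtualEndTower Γ' f n := by
    rintro x ⟨a, rfl⟩
    exact virtualEndTower_mem_apply Γ' f n (A.subtype a) a.2
  have hne : H.relIndex (virtualEndTower Γ' f n) ≠ 0 := by
    intro h0
    have := Subgroup.relIndex_mul_index (virtualEndTower_succ_le Γ' f n)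
    rw [← hHdef, h0, zero_mul] at this
    exact (virtualEndTower_finiteIndex Γ' hΓ' f (n + 1)).index_ne_zero this.symm
  have hBA : B.relIndex A = H.relIndex (f.comp A.subtype).range := by
    rw [Subgroup.relIndex, Subgroup.subgroupOf, hBdef, Subgroup.comap_comap,
      Subgroup.index_comap]
  rw [hLHS, hBA]
  exact Subgroup.relIndex_le_of_le_right hrange hne
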